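/- Fix α, ρ ∈ (−∞,1) \ {0}, ξ ∈ ℝ, δ > 0, an integer m ≥ 1, survival probabilities s_j ∈ (0,1) for 0 ≤ j < m, and a terminal value ζ > 0. Define, for each integer n ≥ 1 and for n = ∞, numbers z_{n,j} > 0 for 0 ≤ j ≤ m by backward recursion: z_{n,m} = ζ for all n (including n = ∞); for finite n and j < m, θ_{n,j} := e^{ξδ}·(Σ_{i=1}^{n} (i/n)^{1−α} · C(n,i) s_j^i (1−s_j)^{n−i} · z_{i,j+1}^{α})^{1/α} and z_{n,j} := (1 + θ_{n,j}^{ρ/(1−ρ)})^{(1−ρ)/ρ}; for n = ∞ and j < m, θ_{∞,j} := e^{ξδ}·s_j^{1/α − 1}·z_{∞,j+1} and z_{∞,j} := (1 + θ_{∞,j}^{ρ/(1−ρ)})^{(1−ρ)/ρ}. Then for each j with 0 ≤ j ≤ m there exists a constant K_j > 0 such that for all integers n ≥ 1, |z_{n,j} − z_{∞,j}| ≤ K_j·n^{−1/2}. -/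

import Mathlib

open scoped BigOperators


-- base monotone with arbitrary exponent sign: x^p ∈ [min(A^p,B^p), max(A^p,B^p)]
lemma EZrpow_mem {A B x p : ℝ} (hA : 0 < A) (hx : x ∈ Set.Icc A B) :
    min (A ^ p) (B ^ p) ≤ x ^ p ∧ x ^ p ≤ max (A ^ p) (B ^ p) := by
  obtain ⟨h1, h2⟩ := hx
  rcases le_or_gt 0 p with hp | hp
  · constructor
    · exact le_trans (min_le_left _ _) (Real.rpow_le_rpow hA.le h1 hp)
    · exact le_trans (Real.rpow_le_rpow (hA.trans_le h1).le h2 hp) (le_max_right _ _)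
  · constructor
    · exact le_trans (min_le_right _ _) (Real.rpow_le_rpow_of_nonpos (hA.trans_le h1) h2 hp.le)
    · exact le_trans (Real.rpow_le_rpow_of_nonpos hA h1 hp.le) (le_max_left _ _)

lemma EZrpow_lipschitz (p A B : ℝ) (hA : 0 < A) :
    ∃ L : ℝ, 0 < L ∧ ∀ x ∈ Set.Icc A B, ∀ y ∈ Set.Icc A B,
      |x ^ p - y ^ p| ≤ L * |x - y| := by
  refine ⟨|p| * max (A ^ (p-1)) (B ^ (p-1)) + 1, by positivity, fun x hx y hy => ?_⟩
  have hB : 0 < B := hA.trans_le (hx.1.trans hx.2)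
  have key : ∀ t ∈ Set.Icc A B, ‖p * t ^ (p-1)‖ ≤ |p| * max (A ^ (p-1)) (B ^ (p-1)) + 1 := by
    intro t ht
    have htpos : 0 < t := hA.trans_le ht.1
    have := (EZrpow_mem hA ht (p := p - 1)).2
    have h0 : ‖p * t ^ (p-1)‖ = |p| * t ^ (p-1) := by
      rw [norm_mul, Real.norm_eq_abs, Real.norm_eq_abs, abs_of_nonneg (Real.rpow_nonneg htpos.le _)]
    rw [h0]
    nlinarith [abs_nonneg p, Real.rpow_nonneg htpos.le (p-1)]
  have := Convex.norm_image_sub_le_of_norm_hasDerivWithin_le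
    (f := fun t : ℝ => t ^ p) (f' := fun t : ℝ => p * t ^ (p-1))
    (s := Set.Icc A B) (fun t ht => (Real.hasDerivAt_rpow_const
      (Or.inl (hA.trans_le ht.1).ne')).hasDerivWithinAt) key (convex_Icc A B) hy hx
  simpa [Real.norm_eq_abs, abs_sub_comm] using this


noncomputable def EZb (n i : ℕ) (x : ℝ) : ℝ := (n.choose i : ℝ) * x ^ i * (1 - x) ^ (n - i)

lemma EZb_eval (n i : ℕ) (x : ℝ) :
    Polynomial.eval x (bernsteinPolynomial ℝ n i) = EZb n i x := by
  simp [bernsteinPolynomial, EZb]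

lemma EZb_sum (n : ℕ) (x : ℝ) : ∑ i ∈ Finset.range (n+1), EZb n i x = 1 := by
  have := bernsteinPolynomial.sum ℝ n
  apply_fun fun p => Polynomial.aeval x p at this
  simpa [map_sum, EZb_eval] using this

lemma EZb_mean (n : ℕ) (x : ℝ) :
    ∑ i ∈ Finset.range (n+1), (i : ℝ) * EZb n i x = n * x := by
  have := bernsteinPolynomial.sum_smul ℝ n
  apply_fun fun p => Polynomial.aeval x p at this
  simpa [map_sum, EZb_eval, nsmul_eq_mul] using this

lemma EZb_var (n : ℕ) (x : ℝ) :
    ∑ i ∈ Finset.range (n+1), ((n:ℝ) * x - (i:ℝ))^2 * EZb n i x = n * x * (1 - x) := by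
  have := bernsteinPolynomial.variance ℝ n
  apply_fun fun p => Polynomial.aeval x p at this
  simpa [map_sum, EZb_eval, nsmul_eq_mul] using this

lemma EZb_nonneg {n i : ℕ} {x : ℝ} (hx0 : 0 ≤ x) (hx1 : x ≤ 1) : 0 ≤ EZb n i x := by
  have : (0:ℝ) ≤ 1 - x := by linarith
  unfold EZb; positivity

lemma EZb_var' {n : ℕ} (hn : 1 ≤ n) {x : ℝ} :
    ∑ i ∈ Finset.range (n+1), ((i:ℝ)/(n:ℝ) - x)^2 * EZb n i x = x * (1 - x) / n := by
  have hn' : (0:ℝ) < n := by exact_mod_cast hn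
  have h := EZb_var n x
  have : ∀ i ∈ Finset.range (n+1), ((i:ℝ)/(n:ℝ) - x)^2 * EZb n i x
      = ((n:ℝ) * x - (i:ℝ))^2 * EZb n i x / (n:ℝ)^2 := by
    intro i _
    have : ((i:ℝ)/(n:ℝ) - x) = (-((n:ℝ) * x - (i:ℝ)))/(n:ℝ) := by field_simp; ring
    rw [this, div_pow, neg_sq]
    ring
  rw [Finset.sum_congr rfl this, ← Finset.sum_div, h]
  field_simp

/-- Chebyshev tail bound for the binomial weights. -/
lemma EZ_cheb {n : ℕ} (hn : 1 ≤ n) {x : ℝ} (hx0 : 0 < x) (hx1 : x < 1)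
    (F : Finset ℕ) (hF : F ⊆ Finset.range (n+1))
    (hcond : ∀ i ∈ F, (i:ℝ) < (n:ℝ) * x / 2) :
    ∑ i ∈ F, EZb n i x ≤ 4 * (1 - x) / ((n:ℝ) * x) := by
  have hn' : (0:ℝ) < n := by exact_mod_cast hn
  have key : ∀ i ∈ F, EZb n i x ≤ ((n:ℝ)*x - (i:ℝ))^2 * EZb n i x / ((n:ℝ)*x/2)^2 := by
    intro i hi
    have h1 : (n:ℝ)*x/2 ≤ (n:ℝ)*x - (i:ℝ) := by
      have := hcond i hi; linarith
    have h2 : ((n:ℝ)*x/2)^2 ≤ ((n:ℝ)*x - (i:ℝ))^2 := by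
      have h3 : (0:ℝ) ≤ (n:ℝ)*x/2 := by positivity
      nlinarith
    have hb := EZb_nonneg (n := n) (i := i) hx0.le hx1.le
    rw [le_div_iff₀ (by positivity : (0:ℝ) < ((n:ℝ)*x/2)^2)]
    nlinarith
  calc ∑ i ∈ F, EZb n i x ≤ ∑ i ∈ F, ((n:ℝ)*x - (i:ℝ))^2 * EZb n i x / ((n:ℝ)*x/2)^2 :=
        Finset.sum_le_sum key
    _ ≤ ∑ i ∈ Finset.range (n+1), ((n:ℝ)*x - (i:ℝ))^2 * EZb n i x / ((n:ℝ)*x/2)^2 := by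
        apply Finset.sum_le_sum_of_subset_of_nonneg hF
        intro i _ _
        have hb := EZb_nonneg (n := n) (i := i) hx0.le hx1.le
        positivity
    _ = ((n:ℝ) * x * (1-x)) / ((n:ℝ)*x/2)^2 := by rw [← Finset.sum_div, EZb_var]
    _ = 4 * (1 - x) / ((n:ℝ) * x) := by field_simp; ring

/-- Cauchy–Schwarz first absolute moment bound. -/
lemma EZ_meanabs {n : ℕ} (hn : 1 ≤ n) {x : ℝ} (hx0 : 0 < x) (hx1 : x < 1) :
    ∑ i ∈ Finset.range (n+1), EZb n i x * |(i:ℝ)/(n:ℝ) - x|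
      ≤ Real.sqrt (x * (1-x) / n) := by
  have hb : ∀ i, 0 ≤ EZb n i x := fun i => EZb_nonneg hx0.le hx1.le
  set f : ℕ → ℝ := fun i => Real.sqrt (EZb n i x)
  set g : ℕ → ℝ := fun i => Real.sqrt (EZb n i x) * |(i:ℝ)/(n:ℝ) - x|
  have hfg : ∀ i, f i * g i = EZb n i x * |(i:ℝ)/(n:ℝ) - x| := by
    intro i
    simp only [f, g]
    rw [← mul_assoc, Real.mul_self_sqrt (hb i)]
  have hcs := Finset.sum_mul_sq_le_sq_mul_sq (Finset.range (n+1)) f g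
  have hf2 : ∑ i ∈ Finset.range (n+1), f i ^ 2 = 1 := by
    simp only [f, Real.sq_sqrt (hb _)]
    exact EZb_sum n x
  have hg2 : ∑ i ∈ Finset.range (n+1), g i ^ 2 = x * (1-x) / n := by
    have : ∀ i, g i ^ 2 = ((i:ℝ)/(n:ℝ) - x)^2 * EZb n i x := by
      intro i
      simp only [g, mul_pow, Real.sq_sqrt (hb _), sq_abs]
      ring
    simp only [this]
    exact EZb_var' hn
  have hsum_eq : ∑ i ∈ Finset.range (n+1), f i * g i
      = ∑ i ∈ Finset.range (n+1), EZb n i x * |(i:ℝ)/(n:ℝ) - x| := by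
    exact Finset.sum_congr rfl (fun i _ => hfg i)
  rw [← hsum_eq]
  have hnonneg : 0 ≤ ∑ i ∈ Finset.range (n+1), f i * g i := by
    apply Finset.sum_nonneg; intro i _
    exact mul_nonneg (Real.sqrt_nonneg _) (mul_nonneg (Real.sqrt_nonneg _) (abs_nonneg _))
  rw [hf2, hg2, one_mul] at hcs
  exact Real.le_sqrt_of_sq_le hcs


lemma EZ_range_split (n : ℕ) (f : ℕ → ℝ) :
    ∑ i ∈ Finset.range (n+1), f i = f 0 + ∑ i ∈ Finset.Icc 1 n, f i := by
  have h : Finset.range (n+1) = insert 0 (Finset.Icc 1 n) := by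
    ext i; simp [Nat.lt_succ_iff]; omega
  rw [h, Finset.sum_insert (by simp)]

lemma EZ_nu_pos {n : ℕ} (hn : 1 ≤ n) : 0 < (n:ℝ) ^ (-(1/2) : ℝ) :=
  Real.rpow_pos_of_pos (by exact_mod_cast hn) _

lemma EZ_inv_le_nu {n : ℕ} (hn : 1 ≤ n) : ((n:ℝ))⁻¹ ≤ (n:ℝ) ^ (-(1/2) : ℝ) := by
  have h1 : (1:ℝ) ≤ (n:ℝ) := by exact_mod_cast hn
  have := Real.rpow_le_rpow_of_exponent_le h1 (by norm_num : (-1:ℝ) ≤ -(1/2))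
  rwa [Real.rpow_neg_one] at this

lemma EZ_sqrt_inv_le_nu {n : ℕ} (hn : 1 ≤ n) : Real.sqrt ((n:ℝ))⁻¹ = (n:ℝ) ^ (-(1/2) : ℝ) := by
  have h0 : (0:ℝ) < (n:ℝ) := by exact_mod_cast hn
  rw [Real.sqrt_inv, Real.sqrt_eq_rpow, ← Real.rpow_neg h0.le]

/-- Tail sum of binomial weights times `i^{-1/2}`. -/
lemma EZ_tailsum {n : ℕ} (hn : 1 ≤ n) {sx : ℝ} (hs0 : 0 < sx) (hs1 : sx < 1) :
    ∑ i ∈ Finset.Icc 1 n, EZb n i sx * (i:ℝ) ^ (-(1/2) : ℝ)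
      ≤ ((sx/2) ^ (-(1/2):ℝ) + 4/sx) * (n:ℝ) ^ (-(1/2) : ℝ) := by
  classical
  have hn' : (0:ℝ) < (n:ℝ) := by exact_mod_cast hn
  have hsub : Finset.Icc 1 n ⊆ Finset.range (n+1) := by
    intro i hi; simp only [Finset.mem_Icc] at hi; simp [Nat.lt_succ_iff, hi.2]
  have hb : ∀ i, 0 ≤ EZb n i sx := fun i => EZb_nonneg hs0.le hs1.le
  set ν := (n:ℝ) ^ (-(1/2) : ℝ) with hν
  have hνpos := EZ_nu_pos hn
  rw [← Finset.sum_filter_add_sum_filter_not (Finset.Icc 1 n)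
    (fun i : ℕ => (n:ℝ) * sx / 2 ≤ (i:ℝ))]
  have hbig : ∑ i ∈ (Finset.Icc 1 n).filter (fun i : ℕ => (n:ℝ) * sx / 2 ≤ (i:ℝ)),
      EZb n i sx * (i:ℝ) ^ (-(1/2) : ℝ) ≤ (sx/2) ^ (-(1/2):ℝ) * ν := by
    have hterm : ∀ i ∈ (Finset.Icc 1 n).filter (fun i : ℕ => (n:ℝ) * sx / 2 ≤ (i:ℝ)),
        EZb n i sx * (i:ℝ) ^ (-(1/2) : ℝ) ≤ EZb n i sx * ((sx/2) ^ (-(1/2):ℝ) * ν) := by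
      intro i hi
      simp only [Finset.mem_filter, Finset.mem_Icc] at hi
      have h1 : (0:ℝ) < (n:ℝ) * sx / 2 := by positivity
      have h2 : (i:ℝ) ^ (-(1/2) : ℝ) ≤ ((n:ℝ) * sx / 2) ^ (-(1/2) : ℝ) :=
        Real.rpow_le_rpow_of_nonpos h1 hi.2 (by norm_num)
      have h3 : ((n:ℝ) * sx / 2) ^ (-(1/2) : ℝ) = ν * (sx/2) ^ (-(1/2):ℝ) := by
        rw [hν, ← Real.mul_rpow hn'.le (by positivity)]
        congr 1; ring
      apply mul_le_mul_of_nonneg_left _ (hb i)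
      rw [h3] at h2; linarith [h2]
    calc _ ≤ ∑ i ∈ (Finset.Icc 1 n).filter (fun i : ℕ => (n:ℝ) * sx / 2 ≤ (i:ℝ)),
          EZb n i sx * ((sx/2) ^ (-(1/2):ℝ) * ν) := Finset.sum_le_sum hterm
      _ = (∑ i ∈ (Finset.Icc 1 n).filter (fun i : ℕ => (n:ℝ) * sx / 2 ≤ (i:ℝ)),
          EZb n i sx) * ((sx/2) ^ (-(1/2):ℝ) * ν) := by rw [Finset.sum_mul]
      _ ≤ 1 * ((sx/2) ^ (-(1/2):ℝ) * ν) := by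
          apply mul_le_mul_of_nonneg_right _ (by positivity)
          calc _ ≤ ∑ i ∈ Finset.range (n+1), EZb n i sx := by
                apply Finset.sum_le_sum_of_subset_of_nonneg
                  ((Finset.filter_subset _ _).trans hsub)
                intro i _ _; exact hb i
            _ = 1 := EZb_sum n sx
      _ = (sx/2) ^ (-(1/2):ℝ) * ν := one_mul _
  have hsmall : ∑ i ∈ (Finset.Icc 1 n).filter (fun i : ℕ => ¬ ((n:ℝ) * sx / 2 ≤ (i:ℝ))),
      EZb n i sx * (i:ℝ) ^ (-(1/2) : ℝ) ≤ (4/sx) * ν := by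
    have hterm : ∀ i ∈ (Finset.Icc 1 n).filter (fun i : ℕ => ¬ ((n:ℝ) * sx / 2 ≤ (i:ℝ))),
        EZb n i sx * (i:ℝ) ^ (-(1/2) : ℝ) ≤ EZb n i sx := by
      intro i hi
      simp only [Finset.mem_filter, Finset.mem_Icc] at hi
      have h1 : (1:ℝ) ≤ (i:ℝ) := by exact_mod_cast hi.1.1
      have h2 : (i:ℝ) ^ (-(1/2) : ℝ) ≤ 1 :=
        Real.rpow_le_one_of_one_le_of_nonpos h1 (by norm_num)
      nlinarith [hb i, Real.rpow_nonneg (by positivity : (0:ℝ) ≤ (i:ℝ)) (-(1/2):ℝ)]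
    calc _ ≤ ∑ i ∈ (Finset.Icc 1 n).filter (fun i : ℕ => ¬ ((n:ℝ) * sx / 2 ≤ (i:ℝ))),
          EZb n i sx := Finset.sum_le_sum hterm
      _ ≤ 4 * (1 - sx) / ((n:ℝ) * sx) := by
          apply EZ_cheb hn hs0 hs1 _ ((Finset.filter_subset _ _).trans hsub)
          intro i hi
          simp only [Finset.mem_filter] at hi
          linarith [hi.2]
      _ ≤ (4/sx) * ((n:ℝ))⁻¹ := by
          rw [show (4:ℝ)/sx * ((n:ℝ))⁻¹ = 4/((n:ℝ)*sx) by field_simp]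
          gcongr
          nlinarith
      _ ≤ (4/sx) * ν := by
          apply mul_le_mul_of_nonneg_left (EZ_inv_le_nu hn) (by positivity)
  linarith [hbig, hsmall]

lemma EZ_gsum_est (α sx : ℝ) (hα1 : α < 1) (hs0 : 0 < sx) (hs1 : sx < 1) :
    ∃ C : ℝ, 0 < C ∧ ∀ n : ℕ, 1 ≤ n →
      |(∑ i ∈ Finset.Icc 1 n, ((i:ℝ)/(n:ℝ)) ^ (1-α) * EZb n i sx) - sx ^ (1-α)|
        ≤ C * (n:ℝ) ^ (-(1/2):ℝ) := by
  classical
  have h1α : (0:ℝ) < 1 - α := by linarith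
  obtain ⟨Lg, hLg, hLip⟩ := EZrpow_lipschitz (1-α) (sx/2) 1 (by positivity)
  refine ⟨Lg * Real.sqrt (sx*(1-sx)) + 8/sx + 1, by positivity, fun n hn => ?_⟩
  have hn' : (0:ℝ) < (n:ℝ) := by exact_mod_cast hn
  have hb : ∀ i, 0 ≤ EZb n i sx := fun i => EZb_nonneg hs0.le hs1.le
  set ν := (n:ℝ) ^ (-(1/2) : ℝ) with hν
  have hνpos := EZ_nu_pos hn
  -- extend Icc sum to range sum
  have hzero : ((0:ℕ):ℝ)/(n:ℝ) = 0 := by simp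
  have hext : ∑ i ∈ Finset.Icc 1 n, ((i:ℝ)/(n:ℝ)) ^ (1-α) * EZb n i sx
      = ∑ i ∈ Finset.range (n+1), ((i:ℝ)/(n:ℝ)) ^ (1-α) * EZb n i sx := by
    rw [EZ_range_split n (fun i => ((i:ℝ)/(n:ℝ)) ^ (1-α) * EZb n i sx)]
    rw [hzero, Real.zero_rpow (by linarith : (1:ℝ)-α ≠ 0)]
    ring
  have hsx : sx ^ (1-α) = ∑ i ∈ Finset.range (n+1), sx ^ (1-α) * EZb n i sx := by
    rw [← Finset.mul_sum, EZb_sum, mul_one]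
  rw [hext, hsx, ← Finset.sum_sub_distrib]
  have habs : |∑ i ∈ Finset.range (n+1),
      (((i:ℝ)/(n:ℝ)) ^ (1-α) * EZb n i sx - sx ^ (1-α) * EZb n i sx)|
      ≤ ∑ i ∈ Finset.range (n+1), |((i:ℝ)/(n:ℝ)) ^ (1-α) - sx ^ (1-α)| * EZb n i sx := by
    refine (Finset.abs_sum_le_sum_abs _ _).trans (le_of_eq ?_)
    apply Finset.sum_congr rfl
    intro i _
    rw [← sub_mul, abs_mul, abs_of_nonneg (hb i)]
  refine habs.trans ?_
  rw [← Finset.sum_filter_add_sum_filter_not (Finset.range (n+1))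
    (fun i : ℕ => (n:ℝ) * sx / 2 ≤ (i:ℝ))]
  have hbig : ∑ i ∈ (Finset.range (n+1)).filter (fun i : ℕ => (n:ℝ) * sx / 2 ≤ (i:ℝ)),
      |((i:ℝ)/(n:ℝ)) ^ (1-α) - sx ^ (1-α)| * EZb n i sx
      ≤ Lg * Real.sqrt (sx*(1-sx)) * ν := by
    have hterm : ∀ i ∈ (Finset.range (n+1)).filter (fun i : ℕ => (n:ℝ) * sx / 2 ≤ (i:ℝ)),
        |((i:ℝ)/(n:ℝ)) ^ (1-α) - sx ^ (1-α)| * EZb n i sx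
          ≤ Lg * (EZb n i sx * |(i:ℝ)/(n:ℝ) - sx|) := by
      intro i hi
      simp only [Finset.mem_filter, Finset.mem_range, Nat.lt_succ_iff] at hi
      have hin1 : sx/2 ≤ (i:ℝ)/(n:ℝ) := by
        rw [le_div_iff₀ hn']; linarith [hi.2]
      have hin2 : (i:ℝ)/(n:ℝ) ≤ 1 := by
        rw [div_le_one hn']; exact_mod_cast hi.1
      have hsIcc : sx ∈ Set.Icc (sx/2) 1 := ⟨by linarith, hs1.le⟩
      have := hLip _ ⟨hin1, hin2⟩ _ hsIcc
      calc |((i:ℝ)/(n:ℝ)) ^ (1-α) - sx ^ (1-α)| * EZb n i sx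
          ≤ (Lg * |(i:ℝ)/(n:ℝ) - sx|) * EZb n i sx :=
            mul_le_mul_of_nonneg_right this (hb i)
        _ = Lg * (EZb n i sx * |(i:ℝ)/(n:ℝ) - sx|) := by ring
    calc _ ≤ ∑ i ∈ (Finset.range (n+1)).filter (fun i : ℕ => (n:ℝ) * sx / 2 ≤ (i:ℝ)),
          Lg * (EZb n i sx * |(i:ℝ)/(n:ℝ) - sx|) := Finset.sum_le_sum hterm
      _ ≤ ∑ i ∈ Finset.range (n+1), Lg * (EZb n i sx * |(i:ℝ)/(n:ℝ) - sx|) := by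
          apply Finset.sum_le_sum_of_subset_of_nonneg (Finset.filter_subset _ _)
          intro i _ _
          have := hb i
          positivity
      _ = Lg * ∑ i ∈ Finset.range (n+1), EZb n i sx * |(i:ℝ)/(n:ℝ) - sx| := by
          rw [Finset.mul_sum]
      _ ≤ Lg * Real.sqrt (sx * (1-sx) / n) :=
          mul_le_mul_of_nonneg_left (EZ_meanabs hn hs0 hs1) hLg.le
      _ = Lg * Real.sqrt (sx*(1-sx)) * ν := by
          rw [div_eq_mul_inv, Real.sqrt_mul (by nlinarith), EZ_sqrt_inv_le_nu hn, mul_assoc]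
  have hsmall : ∑ i ∈ (Finset.range (n+1)).filter (fun i : ℕ => ¬ ((n:ℝ) * sx / 2 ≤ (i:ℝ))),
      |((i:ℝ)/(n:ℝ)) ^ (1-α) - sx ^ (1-α)| * EZb n i sx ≤ (8/sx) * ν := by
    have hterm : ∀ i ∈ (Finset.range (n+1)).filter (fun i : ℕ => ¬ ((n:ℝ) * sx / 2 ≤ (i:ℝ))),
        |((i:ℝ)/(n:ℝ)) ^ (1-α) - sx ^ (1-α)| * EZb n i sx ≤ 2 * EZb n i sx := by
      intro i hi
      simp only [Finset.mem_filter, Finset.mem_range, Nat.lt_succ_iff] at hi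
      have hg1 : ((i:ℝ)/(n:ℝ)) ^ (1-α) ≤ 1 := by
        apply Real.rpow_le_one (by positivity) _ h1α.le
        rw [div_le_one hn']; exact_mod_cast hi.1
      have hg0 : (0:ℝ) ≤ ((i:ℝ)/(n:ℝ)) ^ (1-α) := Real.rpow_nonneg (by positivity) _
      have hs2 : sx ^ (1-α) ≤ 1 := Real.rpow_le_one hs0.le hs1.le h1α.le
      have hs3 : (0:ℝ) ≤ sx ^ (1-α) := Real.rpow_nonneg hs0.le _
      have : |((i:ℝ)/(n:ℝ)) ^ (1-α) - sx ^ (1-α)| ≤ 2 := by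
        rw [abs_le]; constructor <;> linarith
      exact mul_le_mul_of_nonneg_right this (hb i)
    calc _ ≤ ∑ i ∈ (Finset.range (n+1)).filter (fun i : ℕ => ¬ ((n:ℝ) * sx / 2 ≤ (i:ℝ))),
          2 * EZb n i sx := Finset.sum_le_sum hterm
      _ = 2 * ∑ i ∈ (Finset.range (n+1)).filter (fun i : ℕ => ¬ ((n:ℝ) * sx / 2 ≤ (i:ℝ))),
          EZb n i sx := by rw [Finset.mul_sum]
      _ ≤ 2 * (4 * (1 - sx) / ((n:ℝ) * sx)) := by
          apply mul_le_mul_of_nonneg_left _ (by norm_num)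
          apply EZ_cheb hn hs0 hs1 _ (Finset.filter_subset _ _)
          intro i hi
          simp only [Finset.mem_filter] at hi
          linarith [hi.2]
      _ ≤ (8/sx) * ((n:ℝ))⁻¹ := by
          rw [show (8:ℝ)/sx * ((n:ℝ))⁻¹ = 8/((n:ℝ)*sx) by field_simp]
          rw [show (2:ℝ) * (4 * (1 - sx) / ((n:ℝ) * sx)) = (8 * (1-sx))/((n:ℝ)*sx) by ring]
          gcongr
          nlinarith
      _ ≤ (8/sx) * ν := mul_le_mul_of_nonneg_left (EZ_inv_le_nu hn) (by positivity)
  calc _ ≤ Lg * Real.sqrt (sx*(1-sx)) * ν + (8/sx) * ν := add_le_add hbig hsmall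
    _ ≤ (Lg * Real.sqrt (sx*(1-sx)) + 8/sx + 1) * ν := by nlinarith

lemma EZ_T_lower {n : ℕ} (hn : 1 ≤ n) {α sx : ℝ} (hα1 : α < 1) (hα0 : α ≠ 0)
    (hs0 : 0 < sx) (hs1 : sx < 1) :
    min sx (sx ^ (1-α)) ≤ ∑ i ∈ Finset.Icc 1 n, ((i:ℝ)/(n:ℝ)) ^ (1-α) * EZb n i sx := by
  have hn' : (0:ℝ) < (n:ℝ) := by exact_mod_cast hn
  have hb : ∀ i, 0 ≤ EZb n i sx := fun i => EZb_nonneg hs0.le hs1.le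
  have h1α : (0:ℝ) < 1 - α := by linarith
  have hmean : ∑ i ∈ Finset.range (n+1), ((i:ℝ)/(n:ℝ)) * EZb n i sx = sx := by
    have : ∀ i ∈ Finset.range (n+1), ((i:ℝ)/(n:ℝ)) * EZb n i sx
        = ((i:ℝ) * EZb n i sx) / (n:ℝ) := fun i _ => by ring
    rw [Finset.sum_congr rfl this, ← Finset.sum_div, EZb_mean]
    field_simp
  have hext : ∑ i ∈ Finset.Icc 1 n, ((i:ℝ)/(n:ℝ)) ^ (1-α) * EZb n i sx
      = ∑ i ∈ Finset.range (n+1), ((i:ℝ)/(n:ℝ)) ^ (1-α) * EZb n i sx := by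
    rw [EZ_range_split n (fun i => ((i:ℝ)/(n:ℝ)) ^ (1-α) * EZb n i sx)]
    rw [show ((0:ℕ):ℝ)/(n:ℝ) = 0 by simp, Real.zero_rpow (by linarith : (1:ℝ)-α ≠ 0)]
    ring
  rw [hext]
  rcases lt_or_gt_of_ne hα0 with hαneg | hαpos
  · -- α < 0 : Jensen with exponent 1 - α ≥ 1
    refine le_trans (min_le_right _ _) ?_
    have hJ := Real.rpow_arith_mean_le_arith_mean_rpow (Finset.range (n+1))
      (fun i => EZb n i sx) (fun i => (i:ℝ)/(n:ℝ))
      (fun i _ => hb i) (EZb_sum n sx) (fun i _ => by positivity)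
      (by linarith : (1:ℝ) ≤ 1 - α)
    have hLHS : ∑ i ∈ Finset.range (n+1), EZb n i sx * ((i:ℝ)/(n:ℝ)) = sx := by
      calc ∑ i ∈ Finset.range (n+1), EZb n i sx * ((i:ℝ)/(n:ℝ))
          = ∑ i ∈ Finset.range (n+1), ((i:ℝ)/(n:ℝ)) * EZb n i sx :=
            Finset.sum_congr rfl (fun i _ => by ring)
        _ = sx := hmean
    rw [hLHS] at hJ
    refine hJ.trans (le_of_eq ?_)
    exact Finset.sum_congr rfl (fun i _ => by ring)
  · -- 0 < α : use (i/n)^(1-α) ≥ i/n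
    refine le_trans (min_le_left _ _) ?_
    calc sx = ∑ i ∈ Finset.range (n+1), ((i:ℝ)/(n:ℝ)) * EZb n i sx := hmean.symm
      _ ≤ ∑ i ∈ Finset.range (n+1), ((i:ℝ)/(n:ℝ)) ^ (1-α) * EZb n i sx := ?_
    apply Finset.sum_le_sum
    intro i hi
    apply mul_le_mul_of_nonneg_right _ (hb i)
    rcases Nat.eq_zero_or_pos i with h0 | h1
    · subst h0; simp; positivity
    · have ht0 : (0:ℝ) < (i:ℝ)/(n:ℝ) := by
        have : (0:ℝ) < (i:ℝ) := by exact_mod_cast h1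
        positivity
      have ht1 : (i:ℝ)/(n:ℝ) ≤ 1 := by
        rw [div_le_one hn']
        exact_mod_cast Nat.lt_succ_iff.mp (Finset.mem_range.mp hi)
      have := Real.rpow_le_rpow_of_exponent_ge ht0 ht1 (by linarith : 1 - α ≤ 1)
      rwa [Real.rpow_one] at this

lemma EZ_T_upper {n : ℕ} (hn : 1 ≤ n) {α sx : ℝ} (hα1 : α < 1)
    (hs0 : 0 < sx) (hs1 : sx < 1) :
    ∑ i ∈ Finset.Icc 1 n, ((i:ℝ)/(n:ℝ)) ^ (1-α) * EZb n i sx ≤ 1 := by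
  have hn' : (0:ℝ) < (n:ℝ) := by exact_mod_cast hn
  have hb : ∀ i, 0 ≤ EZb n i sx := fun i => EZb_nonneg hs0.le hs1.le
  have hsub : Finset.Icc 1 n ⊆ Finset.range (n+1) := by
    intro i hi; simp only [Finset.mem_Icc] at hi; simp [Nat.lt_succ_iff, hi.2]
  calc ∑ i ∈ Finset.Icc 1 n, ((i:ℝ)/(n:ℝ)) ^ (1-α) * EZb n i sx
      ≤ ∑ i ∈ Finset.Icc 1 n, EZb n i sx := by
        apply Finset.sum_le_sum
        intro i hi
        simp only [Finset.mem_Icc] at hi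
        have h1 : ((i:ℝ)/(n:ℝ)) ^ (1-α) ≤ 1 := by
          apply Real.rpow_le_one (by positivity) _ (by linarith)
          rw [div_le_one hn']; exact_mod_cast hi.2
        nlinarith [hb i, Real.rpow_nonneg (by positivity : (0:ℝ) ≤ (i:ℝ)/(n:ℝ)) (1-α)]
    _ ≤ ∑ i ∈ Finset.range (n+1), EZb n i sx :=
        Finset.sum_le_sum_of_subset_of_nonneg hsub (fun i _ _ => hb i)
    _ = 1 := EZb_sum n sx

lemma EZsum_bounds (α sx a b : ℝ) (hα1 : α < 1) (hα0 : α ≠ 0)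
    (hs0 : 0 < sx) (hs1 : sx < 1) (ha : 0 < a) (hab : a ≤ b)
    (u : ℕ → ℝ) (hu : ∀ i : ℕ, 1 ≤ i → u i ∈ Set.Icc a b)
    {n : ℕ} (hn : 1 ≤ n) :
    min (a^α) (b^α) * min sx (sx ^ (1-α))
      ≤ (∑ i ∈ Finset.Icc 1 n, ((i : ℝ) / (n : ℝ)) ^ (1 - α) * (n.choose i : ℝ)
          * sx ^ i * (1 - sx) ^ (n - i) * (u i) ^ α)
    ∧ (∑ i ∈ Finset.Icc 1 n, ((i : ℝ) / (n : ℝ)) ^ (1 - α) * (n.choose i : ℝ)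
          * sx ^ i * (1 - sx) ^ (n - i) * (u i) ^ α) ≤ max (a^α) (b^α) := by
  have hn' : (0:ℝ) < (n:ℝ) := by exact_mod_cast hn
  have hb : ∀ i, 0 ≤ EZb n i sx := fun i => EZb_nonneg hs0.le hs1.le
  have hrw : ∀ i ∈ Finset.Icc 1 n,
      ((i : ℝ) / (n : ℝ)) ^ (1 - α) * (n.choose i : ℝ) * sx ^ i * (1 - sx) ^ (n - i) * (u i) ^ α
        = ((i:ℝ)/(n:ℝ)) ^ (1-α) * EZb n i sx * (u i) ^ α := by
    intro i _; simp only [EZb]; ring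
  rw [Finset.sum_congr rfl hrw]
  have hgp : ∀ i ∈ Finset.Icc 1 n, (0:ℝ) ≤ ((i:ℝ)/(n:ℝ)) ^ (1-α) * EZb n i sx := by
    intro i _
    exact mul_nonneg (Real.rpow_nonneg (by positivity) _) (hb i)
  have hmz : (0:ℝ) < min (a^α) (b^α) := by
    apply lt_min (Real.rpow_pos_of_pos ha _) (Real.rpow_pos_of_pos (ha.trans_le hab) _)
  constructor
  · calc min (a^α) (b^α) * min sx (sx ^ (1-α))
        ≤ min (a^α) (b^α) * ∑ i ∈ Finset.Icc 1 n, ((i:ℝ)/(n:ℝ)) ^ (1-α) * EZb n i sx :=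
          mul_le_mul_of_nonneg_left (EZ_T_lower hn hα1 hα0 hs0 hs1) hmz.le
      _ = ∑ i ∈ Finset.Icc 1 n, ((i:ℝ)/(n:ℝ)) ^ (1-α) * EZb n i sx * min (a^α) (b^α) := by
          rw [Finset.mul_sum]; exact Finset.sum_congr rfl (fun i _ => by ring)
      _ ≤ ∑ i ∈ Finset.Icc 1 n, ((i:ℝ)/(n:ℝ)) ^ (1-α) * EZb n i sx * (u i) ^ α := by
          apply Finset.sum_le_sum
          intro i hi
          apply mul_le_mul_of_nonneg_left _ (hgp i hi)
          exact (EZrpow_mem ha (hu i (Finset.mem_Icc.mp hi).1)).1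
  · calc ∑ i ∈ Finset.Icc 1 n, ((i:ℝ)/(n:ℝ)) ^ (1-α) * EZb n i sx * (u i) ^ α
        ≤ ∑ i ∈ Finset.Icc 1 n, ((i:ℝ)/(n:ℝ)) ^ (1-α) * EZb n i sx * max (a^α) (b^α) := by
          apply Finset.sum_le_sum
          intro i hi
          exact mul_le_mul_of_nonneg_left (EZrpow_mem ha (hu i (Finset.mem_Icc.mp hi).1)).2
            (hgp i hi)
      _ = (∑ i ∈ Finset.Icc 1 n, ((i:ℝ)/(n:ℝ)) ^ (1-α) * EZb n i sx) * max (a^α) (b^α) := by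
          rw [Finset.sum_mul]
      _ ≤ 1 * max (a^α) (b^α) :=
          mul_le_mul_of_nonneg_right (EZ_T_upper hn hα1 hs0 hs1)
            (le_trans hmz.le (min_le_max))
      _ = max (a^α) (b^α) := one_mul _

lemma EZsum_est (α sx a b w K : ℝ) (hα1 : α < 1) (hα0 : α ≠ 0)
    (hs0 : 0 < sx) (hs1 : sx < 1) (ha : 0 < a) (hwa : a ≤ w) (hwb : w ≤ b) (hK : 0 < K)
    (u : ℕ → ℝ) (hu : ∀ i : ℕ, 1 ≤ i → u i ∈ Set.Icc a b ∧ |u i - w| ≤ K * (i:ℝ) ^ (-(1/2):ℝ)) :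
    ∃ C : ℝ, 0 < C ∧ ∀ n : ℕ, 1 ≤ n →
      |(∑ i ∈ Finset.Icc 1 n, ((i : ℝ) / (n : ℝ)) ^ (1 - α) * (n.choose i : ℝ)
          * sx ^ i * (1 - sx) ^ (n - i) * (u i) ^ α) - sx ^ (1-α) * w ^ α|
        ≤ C * (n:ℝ) ^ (-(1/2):ℝ) := by
  classical
  obtain ⟨Lz, hLz, hLzip⟩ := EZrpow_lipschitz α a b ha
  obtain ⟨Cg, hCg, hCgest⟩ := EZ_gsum_est α sx hα1 hs0 hs1
  set Mw := max (a^α) (b^α) with hMw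
  have hMwpos : 0 < Mw :=
    lt_max_of_lt_left (Real.rpow_pos_of_pos ha _)
  set Cs := (sx/2) ^ (-(1/2):ℝ) + 4/sx with hCs
  have hCspos : 0 < Cs := by
    have := Real.rpow_pos_of_pos (by positivity : (0:ℝ) < sx/2) (-(1/2):ℝ)
    positivity
  refine ⟨Lz * K * Cs + Mw * Cg, by positivity, fun n hn => ?_⟩
  have hn' : (0:ℝ) < (n:ℝ) := by exact_mod_cast hn
  have hb : ∀ i, 0 ≤ EZb n i sx := fun i => EZb_nonneg hs0.le hs1.le
  set ν := (n:ℝ) ^ (-(1/2) : ℝ) with hν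
  have hνpos := EZ_nu_pos hn
  have hrw : ∀ i ∈ Finset.Icc 1 n,
      ((i : ℝ) / (n : ℝ)) ^ (1 - α) * (n.choose i : ℝ) * sx ^ i * (1 - sx) ^ (n - i) * (u i) ^ α
        = ((i:ℝ)/(n:ℝ)) ^ (1-α) * EZb n i sx * (u i) ^ α := by
    intro i _; simp only [EZb]; ring
  rw [Finset.sum_congr rfl hrw]
  set T := ∑ i ∈ Finset.Icc 1 n, ((i:ℝ)/(n:ℝ)) ^ (1-α) * EZb n i sx with hT
  have hdecomp : ∑ i ∈ Finset.Icc 1 n, ((i:ℝ)/(n:ℝ)) ^ (1-α) * EZb n i sx * (u i) ^ α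
      - sx ^ (1-α) * w ^ α
      = (∑ i ∈ Finset.Icc 1 n, ((i:ℝ)/(n:ℝ)) ^ (1-α) * EZb n i sx * ((u i) ^ α - w ^ α))
        + w ^ α * (T - sx ^ (1-α)) := by
    have e1 : ∑ i ∈ Finset.Icc 1 n, ((i:ℝ)/(n:ℝ)) ^ (1-α) * EZb n i sx * ((u i) ^ α - w ^ α)
        = (∑ i ∈ Finset.Icc 1 n, ((i:ℝ)/(n:ℝ)) ^ (1-α) * EZb n i sx * (u i) ^ α)
          - ∑ i ∈ Finset.Icc 1 n, ((i:ℝ)/(n:ℝ)) ^ (1-α) * EZb n i sx * w ^ α := by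
      rw [← Finset.sum_sub_distrib]
      exact Finset.sum_congr rfl (fun i _ => by ring)
    have e2 : ∑ i ∈ Finset.Icc 1 n, ((i:ℝ)/(n:ℝ)) ^ (1-α) * EZb n i sx * w ^ α
        = w ^ α * T := by
      rw [hT, Finset.mul_sum]
      exact Finset.sum_congr rfl (fun i _ => by ring)
    rw [e1, e2]; ring
  rw [hdecomp]
  have hA : |∑ i ∈ Finset.Icc 1 n, ((i:ℝ)/(n:ℝ)) ^ (1-α) * EZb n i sx * ((u i) ^ α - w ^ α)|
      ≤ Lz * K * Cs * ν := by
    have hterm : ∀ i ∈ Finset.Icc 1 n,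
        |((i:ℝ)/(n:ℝ)) ^ (1-α) * EZb n i sx * ((u i) ^ α - w ^ α)|
          ≤ Lz * K * (EZb n i sx * (i:ℝ) ^ (-(1/2):ℝ)) := by
      intro i hi
      simp only [Finset.mem_Icc] at hi
      have hi1 : (1:ℝ) ≤ (i:ℝ) := by exact_mod_cast hi.1
      have hg0 : (0:ℝ) ≤ ((i:ℝ)/(n:ℝ)) ^ (1-α) := Real.rpow_nonneg (by positivity) _
      have hg1 : ((i:ℝ)/(n:ℝ)) ^ (1-α) ≤ 1 := by
        apply Real.rpow_le_one (by positivity) _ (by linarith)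
        rw [div_le_one hn']; exact_mod_cast hi.2
      obtain ⟨hui, huest⟩ := hu i hi.1
      have h1 : |(u i) ^ α - w ^ α| ≤ Lz * (K * (i:ℝ) ^ (-(1/2):ℝ)) :=
        (hLzip _ hui _ ⟨hwa, hwb⟩).trans (mul_le_mul_of_nonneg_left huest hLz.le)
      have hiν : (0:ℝ) ≤ (i:ℝ) ^ (-(1/2):ℝ) := Real.rpow_nonneg (by positivity) _
      calc |((i:ℝ)/(n:ℝ)) ^ (1-α) * EZb n i sx * ((u i) ^ α - w ^ α)|
          = ((i:ℝ)/(n:ℝ)) ^ (1-α) * EZb n i sx * |(u i) ^ α - w ^ α| := by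
            rw [abs_mul, abs_of_nonneg (mul_nonneg hg0 (hb i))]
        _ ≤ (1 * EZb n i sx) * (Lz * (K * (i:ℝ) ^ (-(1/2):ℝ))) := by
            apply mul_le_mul _ h1 (abs_nonneg _) (by nlinarith [hb i])
            apply mul_le_mul_of_nonneg_right hg1 (hb i)
        _ = Lz * K * (EZb n i sx * (i:ℝ) ^ (-(1/2):ℝ)) := by ring
    calc |∑ i ∈ Finset.Icc 1 n, ((i:ℝ)/(n:ℝ)) ^ (1-α) * EZb n i sx * ((u i) ^ α - w ^ α)|
        ≤ ∑ i ∈ Finset.Icc 1 n,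
            |((i:ℝ)/(n:ℝ)) ^ (1-α) * EZb n i sx * ((u i) ^ α - w ^ α)| :=
          Finset.abs_sum_le_sum_abs _ _
      _ ≤ ∑ i ∈ Finset.Icc 1 n, Lz * K * (EZb n i sx * (i:ℝ) ^ (-(1/2):ℝ)) :=
          Finset.sum_le_sum hterm
      _ = Lz * K * ∑ i ∈ Finset.Icc 1 n, EZb n i sx * (i:ℝ) ^ (-(1/2):ℝ) := by
          rw [Finset.mul_sum]
      _ ≤ Lz * K * (Cs * ν) := by
          apply mul_le_mul_of_nonneg_left _ (by positivity)
          rw [hCs, hν]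
          exact EZ_tailsum hn hs0 hs1
      _ = Lz * K * Cs * ν := by ring
  have hB : w ^ α * |T - sx ^ (1-α)| ≤ Mw * Cg * ν := by
    have hw0 : (0:ℝ) ≤ w ^ α := Real.rpow_nonneg (ha.trans_le hwa).le _
    have hwMw : w ^ α ≤ Mw := (EZrpow_mem ha ⟨hwa, hwb⟩).2
    have hTest : |T - sx ^ (1-α)| ≤ Cg * ν := hCgest n hn
    calc w ^ α * |T - sx ^ (1-α)| ≤ Mw * (Cg * ν) :=
          mul_le_mul hwMw hTest (abs_nonneg _) hMwpos.le
      _ = Mw * Cg * ν := by ring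
  calc |(∑ i ∈ Finset.Icc 1 n, ((i:ℝ)/(n:ℝ)) ^ (1-α) * EZb n i sx * ((u i) ^ α - w ^ α))
        + w ^ α * (T - sx ^ (1-α))|
      ≤ |∑ i ∈ Finset.Icc 1 n, ((i:ℝ)/(n:ℝ)) ^ (1-α) * EZb n i sx * ((u i) ^ α - w ^ α)|
        + |w ^ α * (T - sx ^ (1-α))| := abs_add_le _ _
    _ ≤ Lz * K * Cs * ν + Mw * Cg * ν := by
        apply add_le_add hA
        rw [abs_mul, abs_of_nonneg (Real.rpow_nonneg (ha.trans_le hwa).le α)]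
        exact hB
    _ = (Lz * K * Cs + Mw * Cg) * ν := by ring

lemma EZ_F (p q r E Slo Shi : ℝ) (hE : 0 < E) (hSlo : 0 < Slo) (hSS : Slo ≤ Shi) :
    ∃ Flo Fhi L : ℝ, 0 < Flo ∧ 0 < L ∧ ∀ x ∈ Set.Icc Slo Shi,
      ((1 + (E * x ^ p) ^ q) ^ r ∈ Set.Icc Flo Fhi ∧
       ∀ y ∈ Set.Icc Slo Shi,
        |(1 + (E * x ^ p) ^ q) ^ r - (1 + (E * y ^ p) ^ q) ^ r| ≤ L * |x - y|) := by
  set T1 := min (Slo ^ p) (Shi ^ p) with hT1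
  set T2 := max (Slo ^ p) (Shi ^ p) with hT2
  have hT1pos : 0 < T1 :=
    lt_min (Real.rpow_pos_of_pos hSlo _) (Real.rpow_pos_of_pos (hSlo.trans_le hSS) _)
  have hTmem : ∀ x ∈ Set.Icc Slo Shi, x ^ p ∈ Set.Icc T1 T2 := by
    intro x hx; exact ⟨(EZrpow_mem hSlo hx).1, (EZrpow_mem hSlo hx).2⟩
  set U1 := min ((E*T1) ^ q) ((E*T2) ^ q) with hU1
  set U2 := max ((E*T1) ^ q) ((E*T2) ^ q) with hU2
  have hET1 : 0 < E * T1 := by positivity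
  have hU1pos : 0 < U1 := by
    apply lt_min (Real.rpow_pos_of_pos hET1 _)
    exact Real.rpow_pos_of_pos (by nlinarith [hT1pos, min_le_max (a := Slo ^ p) (b := Shi ^ p)]) _
  have hUmem : ∀ x ∈ Set.Icc Slo Shi, (E * x ^ p) ^ q ∈ Set.Icc U1 U2 := by
    intro x hx
    have h1 := hTmem x hx
    have h2 : E * x ^ p ∈ Set.Icc (E*T1) (E*T2) :=
      ⟨mul_le_mul_of_nonneg_left h1.1 hE.le, mul_le_mul_of_nonneg_left h1.2 hE.le⟩
    exact ⟨(EZrpow_mem hET1 h2).1, (EZrpow_mem hET1 h2).2⟩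
  obtain ⟨L1, hL1, hLip1⟩ := EZrpow_lipschitz p Slo Shi hSlo
  obtain ⟨L2, hL2, hLip2⟩ := EZrpow_lipschitz q (E*T1) (E*T2) hET1
  obtain ⟨L3, hL3, hLip3⟩ := EZrpow_lipschitz r (1+U1) (1+U2) (by linarith)
  refine ⟨min ((1+U1) ^ r) ((1+U2) ^ r), max ((1+U1) ^ r) ((1+U2) ^ r),
    L3 * L2 * E * L1, lt_min (Real.rpow_pos_of_pos (by linarith) _)
      (Real.rpow_pos_of_pos (by nlinarith [hU1pos, min_le_max (a := (E*T1) ^ q) (b := (E*T2) ^ q)]) _),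
    by positivity, fun x hx => ⟨?_, fun y hy => ?_⟩⟩
  · have h1 := hUmem x hx
    have h2 : 1 + (E * x ^ p) ^ q ∈ Set.Icc (1+U1) (1+U2) := ⟨by linarith [h1.1], by linarith [h1.2]⟩
    exact ⟨(EZrpow_mem (by linarith) h2).1, (EZrpow_mem (by linarith) h2).2⟩
  · have hux := hUmem x hx
    have huy := hUmem y hy
    have hx2 : 1 + (E * x ^ p) ^ q ∈ Set.Icc (1+U1) (1+U2) :=
      ⟨by linarith [hux.1], by linarith [hux.2]⟩
    have hy2 : 1 + (E * y ^ p) ^ q ∈ Set.Icc (1+U1) (1+U2) :=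
      ⟨by linarith [huy.1], by linarith [huy.2]⟩
    have hEx : E * x ^ p ∈ Set.Icc (E*T1) (E*T2) := by
      have h1 := hTmem x hx
      exact ⟨mul_le_mul_of_nonneg_left h1.1 hE.le, mul_le_mul_of_nonneg_left h1.2 hE.le⟩
    have hEy : E * y ^ p ∈ Set.Icc (E*T1) (E*T2) := by
      have h1 := hTmem y hy
      exact ⟨mul_le_mul_of_nonneg_left h1.1 hE.le, mul_le_mul_of_nonneg_left h1.2 hE.le⟩
    calc |(1 + (E * x ^ p) ^ q) ^ r - (1 + (E * y ^ p) ^ q) ^ r|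
        ≤ L3 * |(1 + (E * x ^ p) ^ q) - (1 + (E * y ^ p) ^ q)| := hLip3 _ hx2 _ hy2
      _ = L3 * |(E * x ^ p) ^ q - (E * y ^ p) ^ q| := by rw [add_sub_add_left_eq_sub]
      _ ≤ L3 * (L2 * |E * x ^ p - E * y ^ p|) :=
          mul_le_mul_of_nonneg_left (hLip2 _ hEx _ hEy) hL3.le
      _ = L3 * (L2 * (E * |x ^ p - y ^ p|)) := by
          rw [← mul_sub, abs_mul, abs_of_nonneg hE.le]
      _ ≤ L3 * (L2 * (E * (L1 * |x - y|))) := by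
          apply mul_le_mul_of_nonneg_left _ hL3.le
          apply mul_le_mul_of_nonneg_left _ hL2.le
          exact mul_le_mul_of_nonneg_left (hLip1 _ hx _ hy) hE.le
      _ = L3 * L2 * E * L1 * |x - y| := by ring

/-- Convergence of the finite-collective Epstein–Zin value function to the
infinite-collective value at rate `n^{−1/2}`: with the backward recursions
`z_{n,m} = ζ`, `θ_{n,j} = e^{ξδ} (Σ_{i=1}^n (i/n)^{1−α} C(n,i) s_j^i (1−s_j)^{n−i} z_{i,j+1}^α)^{1/α}`,
`z_{n,j} = (1 + θ_{n,j}^{ρ/(1−ρ)})^{(1−ρ)/ρ}`, and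
`z_{∞,j} = (1 + (e^{ξδ} s_j^{1/α−1} z_{∞,j+1})^{ρ/(1−ρ)})^{(1−ρ)/ρ}`,
for each `j ≤ m` there is `K_j > 0` with `|z_{n,j} − z_{∞,j}| ≤ K_j n^{−1/2}` for all `n ≥ 1`. -/
theorem finite_collective_value_convergence
    (α ρ ξ δ : ℝ) (hα1 : α < 1) (hα0 : α ≠ 0) (hρ1 : ρ < 1) (hρ0 : ρ ≠ 0)
    (hδ : 0 < δ) (m : ℕ) (hm : 1 ≤ m)
    (s : ℕ → ℝ) (hs : ∀ j < m, s j ∈ Set.Ioo (0:ℝ) 1)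
    (ζ : ℝ) (hζ : 0 < ζ)
    (z : ℕ → ℕ → ℝ) (zInf : ℕ → ℝ)
    (hzpos : ∀ n, 1 ≤ n → ∀ j ≤ m, 0 < z n j)
    (hzInfpos : ∀ j ≤ m, 0 < zInf j)
    (hzT : ∀ n, 1 ≤ n → z n m = ζ) (hzInfT : zInf m = ζ)
    (hzrec : ∀ n, 1 ≤ n → ∀ j < m,
      z n j = (1 + (Real.exp (ξ * δ) *
        (∑ i ∈ Finset.Icc 1 n, ((i : ℝ) / (n : ℝ)) ^ (1 - α) * (n.choose i : ℝ)
            * (s j) ^ i * (1 - s j) ^ (n - i) * (z i (j+1)) ^ α) ^ (1/α)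
        ) ^ (ρ/(1-ρ))) ^ ((1-ρ)/ρ))
    (hzInfrec : ∀ j < m,
      zInf j = (1 + (Real.exp (ξ * δ) * (s j) ^ (1/α - 1) * zInf (j+1))
        ^ (ρ/(1-ρ))) ^ ((1-ρ)/ρ)) :
    ∀ j ≤ m, ∃ K : ℝ, 0 < K ∧ ∀ n : ℕ, 1 ≤ n →
      |z n j - zInf j| ≤ K * (n : ℝ) ^ (-(1/2) : ℝ) := by
  suffices H : ∀ d : ℕ, ∀ j : ℕ, j + d = m →
      ∃ a b K : ℝ, 0 < a ∧ 0 < K ∧ zInf j ∈ Set.Icc a b ∧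
        ∀ n : ℕ, 1 ≤ n → z n j ∈ Set.Icc a b ∧
          |z n j - zInf j| ≤ K * (n:ℝ) ^ (-(1/2):ℝ) by
    intro j hj
    obtain ⟨a, b, K, _, hK, _, h⟩ := H (m - j) j (by omega)
    exact ⟨K, hK, fun n hn => (h n hn).2⟩
  intro d
  induction d with
  | zero =>
    intro j hj
    have hjm : j = m := by omega
    subst hjm
    refine ⟨ζ, ζ, 1, hζ, one_pos, by rw [hzInfT]; exact ⟨le_rfl, le_rfl⟩, fun n hn => ?_⟩
    rw [hzT n hn, hzInfT]
    have := EZ_nu_pos hn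
    exact ⟨⟨le_rfl, le_rfl⟩, by rw [sub_self, abs_zero]; linarith⟩
  | succ d ihd =>
    intro j hj
    have hjm : j < m := by omega
    obtain ⟨a, b, K, ha, hK, hwmem, hprev⟩ := ihd (j+1) (by omega)
    obtain ⟨hsj0, hsj1⟩ := hs j hjm
    set sj := s j
    set w := zInf (j+1) with hwdef
    set E := Real.exp (ξ * δ) with hE
    have hEpos : 0 < E := Real.exp_pos _
    have hwa : a ≤ w := hwmem.1
    have hwb : w ≤ b := hwmem.2
    have hwpos : 0 < w := ha.trans_le hwa
    -- the sum estimate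
    obtain ⟨C, hC, hest⟩ := EZsum_est α sj a b w K hα1 hα0 hsj0 hsj1 ha hwa hwb hK
      (fun i => z i (j+1)) (fun i hi => ⟨(hprev i hi).1, (hprev i hi).2⟩)
    -- the interval containing all the sums and the limit value
    set Sinf := sj ^ (1-α) * w ^ α with hSinf
    have hSinfpos : 0 < Sinf :=
      mul_pos (Real.rpow_pos_of_pos hsj0 _) (Real.rpow_pos_of_pos hwpos _)
    set Slo := min (min (a^α) (b^α) * min sj (sj ^ (1-α))) Sinf with hSlo
    set Shi := max (max (a^α) (b^α)) Sinf with hShi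
    have hSlopos : 0 < Slo := by
      apply lt_min _ hSinfpos
      apply mul_pos (lt_min (Real.rpow_pos_of_pos ha _)
        (Real.rpow_pos_of_pos (ha.trans_le (hwa.trans hwb)) _))
      exact lt_min hsj0 (Real.rpow_pos_of_pos hsj0 _)
    have hSloShi : Slo ≤ Shi := by
      exact le_trans (min_le_right _ _) (le_max_right _ _)
    obtain ⟨Flo, Fhi, L, hFlo, hL, hF⟩ := EZ_F (1/α) (ρ/(1-ρ)) ((1-ρ)/ρ) E Slo Shi
      hEpos hSlopos hSloShi
    -- the limit value is F applied to Sinf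
    have hSinfmem : Sinf ∈ Set.Icc Slo Shi :=
      ⟨min_le_right _ _, le_max_right _ _⟩
    have hrpowid : E * sj ^ (1/α - 1) * w = E * Sinf ^ (1/α) := by
      rw [hSinf, Real.mul_rpow (Real.rpow_nonneg hsj0.le _) (Real.rpow_nonneg hwpos.le _),
        ← Real.rpow_mul hsj0.le, ← Real.rpow_mul hwpos.le,
        show (1-α) * (1/α) = 1/α - 1 by field_simp,
        show α * (1/α) = 1 by field_simp, Real.rpow_one]
      ring
    have hzInfF : zInf j = (1 + (E * Sinf ^ (1/α)) ^ (ρ/(1-ρ))) ^ ((1-ρ)/ρ) := by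
      rw [hzInfrec j hjm, ← hrpowid]
    refine ⟨Flo, Fhi, L * C, hFlo, by positivity, ?_, fun n hn => ?_⟩
    · rw [hzInfF]
      exact (hF Sinf hSinfmem).1
    · set Sn := ∑ i ∈ Finset.Icc 1 n, ((i : ℝ) / (n : ℝ)) ^ (1 - α) * (n.choose i : ℝ)
        * sj ^ i * (1 - sj) ^ (n - i) * (z i (j+1)) ^ α with hSn
    -- bounds on the sum
      have hbnds := EZsum_bounds α sj a b hα1 hα0 hsj0 hsj1 ha (hwa.trans hwb)
        (fun i => z i (j+1)) (fun i hi => (hprev i hi).1) hn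
      have hSnmem : Sn ∈ Set.Icc Slo Shi :=
        ⟨le_trans (min_le_left _ _) hbnds.1, le_trans hbnds.2 (le_max_left _ _)⟩
      have hzF : z n j = (1 + (E * Sn ^ (1/α)) ^ (ρ/(1-ρ))) ^ ((1-ρ)/ρ) := hzrec n hn j hjm
      constructor
      · rw [hzF]; exact (hF Sn hSnmem).1
      · rw [hzF, hzInfF]
        calc |(1 + (E * Sn ^ (1/α)) ^ (ρ/(1-ρ))) ^ ((1-ρ)/ρ)
              - (1 + (E * Sinf ^ (1/α)) ^ (ρ/(1-ρ))) ^ ((1-ρ)/ρ)|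
            ≤ L * |Sn - Sinf| := (hF Sn hSnmem).2 Sinf hSinfmem
          _ ≤ L * (C * (n:ℝ) ^ (-(1/2):ℝ)) :=
              mul_le_mul_of_nonneg_left (hest n hn) hL.le
          _ = L * C * (n:ℝ) ^ (-(1/2):ℝ) := by ring
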